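/- Let x = (x₁,…,xₙ) and y = (y₁,…,yₙ) be sequences of nonnegative reals with equal sums, both sorted in nonincreasing order. Suppose x strictly dominates y, i.e., Σ_{j≤i} xⱼ ≥ Σ_{j≤i} yⱼ for all i and x ≠ y. Then H(x) < H(y), where H(z₁,…,zₙ) = Σᵢ zᵢ·log₂(S/zᵢ) with S = Σᵢ zᵢ > 0. -/

import Mathlib

open Real Finset

noncomputable def sc (a b : ℝ) : ℝ :=
  if a = b then Real.log a + 1 else (b * Real.log b - a * Real.log a) / (b - a)

lemma sc_diag (a : ℝ) : sc a a = Real.log a + 1 := if_pos rfl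

lemma sc_symm (a b : ℝ) : sc a b = sc b a := by
  rcases eq_or_ne a b with h | h
  · rw [h]
  · rw [sc, sc, if_neg h, if_neg (Ne.symm h),
      div_eq_div_iff (sub_ne_zero.2 (Ne.symm h)) (sub_ne_zero.2 h)]
    ring

/-- F1 : secant slope < derivative at right endpoint -/
lemma sc_lt_right (a b : ℝ) (ha : 0 ≤ a) (hab : a < b) : sc a b < Real.log b + 1 := by
  have hb : 0 < b := lt_of_le_of_lt ha hab
  rw [sc, if_neg hab.ne, div_lt_iff₀ (by linarith)]
  rcases eq_or_lt_of_le ha with h | ha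
  · rw [← h]
    simp only [Real.log_zero, mul_zero, zero_mul, sub_zero]
    nlinarith
  · have h1 : Real.log (b / a) < b / a - 1 := by
      apply Real.log_lt_sub_one_of_pos (div_pos (by linarith) ha)
      intro h
      rw [div_eq_one_iff_eq (by linarith)] at h
      exact hab.ne' h
    rw [Real.log_div (by linarith) (by linarith)] at h1
    have h2 : a * (Real.log b - Real.log a) < a * (b / a - 1) :=
      (mul_lt_mul_iff_right₀ ha).2 h1
    have h3 : a * (b / a - 1) = b - a := by field_simp
    nlinarith [h2]

/-- F2 : derivative at left endpoint < secant slope -/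
lemma sc_gt_left (a b : ℝ) (ha : 0 < a) (hab : a < b) : Real.log a + 1 < sc a b := by
  rw [sc, if_neg hab.ne, lt_div_iff₀ (by linarith)]
  have h1 : Real.log (a / b) < a / b - 1 := by
    apply Real.log_lt_sub_one_of_pos (div_pos ha (by linarith))
    intro h
    rw [div_eq_one_iff_eq (by linarith)] at h
    exact hab.ne h
  rw [Real.log_div (by linarith) (by linarith)] at h1
  have h2 : b * (Real.log a - Real.log b) < b * (a / b - 1) :=
    (mul_lt_mul_iff_right₀ (by linarith)).2 h1
  have hb0 : b ≠ 0 := by linarith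
  have h3 : b * (a / b - 1) = a - b := by field_simp
  nlinarith [h2]

lemma sc_combo (p q r : ℝ) (h1 : p < q) (h2 : q < r) :
    (r - p) * sc p r = (q - p) * sc p q + (r - q) * sc q r := by
  have d1 : q - p ≠ 0 := sub_ne_zero.2 h1.ne'
  have d2 : r - q ≠ 0 := sub_ne_zero.2 h2.ne'
  have d3 : r - p ≠ 0 := sub_ne_zero.2 (h1.trans h2).ne'
  rw [sc, sc, sc, if_neg (h1.trans h2).ne, if_neg h1.ne, if_neg h2.ne]
  field_simp
  ring

/-- three-point strict -/
lemma sc_three (p q r : ℝ) (hp : 0 ≤ p) (h1 : p < q) (h2 : q < r) : sc p q < sc q r :=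
  (sc_lt_right p q hp h1).trans (sc_gt_left q r (lt_of_le_of_lt hp h1) h2)

lemma sc_right_mono (p q q' : ℝ) (hp : 0 ≤ p) (hpq : p ≤ q) (hqq : q ≤ q') (hq : 0 < q) :
    sc p q ≤ sc p q' := by
  rcases eq_or_lt_of_le hqq with rfl | hqq
  · exact le_refl _
  rcases eq_or_lt_of_le hpq with rfl | hpq
  · rw [sc_diag]
    exact (sc_gt_left p q' hq hqq).le
  · have key := sc_combo p q q' hpq hqq
    have hG := sc_three p q q' hp hpq hqq
    nlinarith [key, mul_pos (sub_pos.2 hqq) (sub_pos.2 hG)]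

lemma sc_left_mono (p p' q : ℝ) (hp : 0 ≤ p) (hpp : p ≤ p') (hpq : p' ≤ q) (hq : 0 < q) :
    sc p q ≤ sc p' q := by
  rcases eq_or_lt_of_le hpp with rfl | hpp
  · exact le_refl _
  rcases eq_or_lt_of_le hpq with rfl | hpq
  · rw [sc_diag]
    exact (sc_lt_right p p' hp hpp).le
  · have key := sc_combo p p' q hpp hpq
    have hG := sc_three p p' q hp hpp hpq
    nlinarith [key, mul_pos (sub_pos.2 hpp) (sub_pos.2 hG)]

/-- strict comparison for essentially disjoint intervals -/
lemma sc_strict (w v u z : ℝ) (hw : 0 ≤ w) (hwv : w < v) (hvu : v ≤ u) (huz : u < z) :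
    sc w v < sc u z := by
  have hv : 0 < v := lt_of_le_of_lt hw hwv
  have hu : 0 < u := lt_of_lt_of_le hv hvu
  calc sc w v < Real.log v + 1 := sc_lt_right w v hw hwv
    _ ≤ Real.log u + 1 := by
        have := Real.log_le_log hv hvu
        linarith
    _ < sc u z := sc_gt_left u z hu huz

/-- componentwise monotonicity -/
lemma sc_mono {a' b' a b : ℝ} (ha' : 0 ≤ a') (hb' : 0 ≤ b') (h1 : a' ≤ a) (h2 : b' ≤ b)
    (hnd : ¬(a' = 0 ∧ b' = 0)) : sc a' b' ≤ sc a b := by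
  by_cases hab' : a' ≤ b'
  · have hb'pos : 0 < b' := by
      rcases eq_or_lt_of_le hb' with h | h
      · exact absurd ⟨le_antisymm (h ▸ hab') ha', h.symm⟩ hnd
      · exact h
    have hbpos : 0 < b := lt_of_lt_of_le hb'pos h2
    by_cases hab : a ≤ b
    · calc sc a' b' ≤ sc a' b := sc_right_mono a' b' b ha' hab' h2 hb'pos
        _ ≤ sc a b := sc_left_mono a' a b ha' h1 hab hbpos
    · push_neg at hab
      rw [sc_symm a b]
      have step1 : sc a' b' ≤ Real.log b' + 1 := by
        rcases eq_or_lt_of_le hab' with rfl | h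
        · rw [sc_diag]
        · exact (sc_lt_right a' b' ha' h).le
      have step2 : Real.log b' + 1 ≤ Real.log b + 1 := by
        have := Real.log_le_log hb'pos h2
        linarith
      have step3 : Real.log b + 1 < sc b a := sc_gt_left b a hbpos hab
      linarith
  · push_neg at hab'
    have ha'pos : 0 < a' := lt_of_le_of_lt hb' hab'
    have hapos : 0 < a := lt_of_lt_of_le ha'pos h1
    rw [sc_symm a' b']
    by_cases hab : a ≤ b
    · have step1 : sc b' a' ≤ Real.log a' + 1 := (sc_lt_right b' a' hb' hab').le
      have step2 : Real.log a' + 1 ≤ Real.log a + 1 := by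
        have := Real.log_le_log ha'pos h1
        linarith
      have step3 : Real.log a + 1 ≤ sc a b := by
        rcases eq_or_lt_of_le hab with rfl | h
        · rw [sc_diag]
        · exact (sc_gt_left a b hapos h).le
      linarith
    · push_neg at hab
      rw [sc_symm a b]
      calc sc b' a' ≤ sc b' a := sc_right_mono b' a' a hb' hab'.le h1 ha'pos
        _ ≤ sc b a := sc_left_mono b' b a hb' h2 hab.le hapos

theorem domination_entropy (n : ℕ) (x y : Fin n → ℝ)
    (hx0 : ∀ i, 0 ≤ x i) (hy0 : ∀ i, 0 ≤ y i)
    (hxa : Antitone x) (hya : Antitone y)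
    (S : ℝ) (hS : 0 < S) (hxS : ∑ i, x i = S) (hyS : ∑ i, y i = S)
    (hdom : ∀ i : Fin n, ∑ j ∈ Finset.Iic i, y j ≤ ∑ j ∈ Finset.Iic i, x j)
    (hne : x ≠ y) :
    ∑ i, x i * Real.logb 2 (S / x i) < ∑ i, y i * Real.logb 2 (S / y i) := by
  classical
  have hn : 0 < n := by
    rcases Nat.eq_zero_or_pos n with rfl | h
    · exact absurd (funext fun i => i.elim0) hne
    · exact h
  set X : ℕ → ℝ := fun i => if h : i < n then x ⟨i, h⟩ else 0 with hXdef
  set Y : ℕ → ℝ := fun i => if h : i < n then y ⟨i, h⟩ else 0 with hYdef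
  have hXv : ∀ i : Fin n, X i.1 = x i := fun i => by simp [hXdef, i.2]
  have hYv : ∀ i : Fin n, Y i.1 = y i := fun i => by simp [hYdef, i.2]
  have hX0 : ∀ i, 0 ≤ X i := by
    intro i; rw [hXdef]; dsimp only; split
    · exact hx0 _
    · exact le_refl 0
  have hY0 : ∀ i, 0 ≤ Y i := by
    intro i; rw [hYdef]; dsimp only; split
    · exact hy0 _
    · exact le_refl 0
  have hXanti : ∀ i j, i ≤ j → X j ≤ X i := by
    intro i j hij
    by_cases hjn : j < n
    · have hin : i < n := lt_of_le_of_lt hij hjn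
      rw [hXdef]; dsimp only; rw [dif_pos hjn, dif_pos hin]
      exact hxa (show (⟨i, hin⟩ : Fin n) ≤ ⟨j, hjn⟩ from hij)
    · have : X j = 0 := by rw [hXdef]; dsimp only; rw [dif_neg hjn]
      rw [this]; exact hX0 i
  have hYanti : ∀ i j, i ≤ j → Y j ≤ Y i := by
    intro i j hij
    by_cases hjn : j < n
    · have hin : i < n := lt_of_le_of_lt hij hjn
      rw [hYdef]; dsimp only; rw [dif_pos hjn, dif_pos hin]
      exact hya (show (⟨i, hin⟩ : Fin n) ≤ ⟨j, hjn⟩ from hij)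
    · have : Y j = 0 := by rw [hYdef]; dsimp only; rw [dif_neg hjn]
      rw [this]; exact hY0 i
  have hconv : ∀ (f : Fin n → ℝ) (g : ℕ → ℝ), (∀ i : Fin n, g i.1 = f i) →
      ∑ i ∈ Finset.range n, g i = ∑ i, f i := by
    intro f g hfg
    rw [← Fin.sum_univ_eq_sum_range]
    exact Finset.sum_congr rfl fun i _ => hfg i
  have hXS : ∑ i ∈ Finset.range n, X i = S := by rw [hconv x X hXv, hxS]
  have hYS : ∑ i ∈ Finset.range n, Y i = S := by rw [hconv y Y hYv, hyS]
  set D : ℕ → ℝ := fun i => X i - Y i with hDdef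
  set P : ℕ → ℝ := fun i => ∑ j ∈ Finset.range (i + 1), D j with hPdef
  have hDz : ∀ j, n ≤ j → D j = 0 := by
    intro j hj
    rw [hDdef]; dsimp only
    rw [hXdef, hYdef]; dsimp only
    rw [dif_neg (by omega), dif_neg (by omega)]; ring
  have htot : ∑ j ∈ Finset.range n, D j = 0 := by
    rw [hDdef]; dsimp only
    rw [Finset.sum_sub_distrib, hXS, hYS]; ring
  have hPtot : ∀ m, n ≤ m + 1 → P m = 0 := by
    intro m hm
    rw [hPdef]; dsimp only
    rw [← Finset.sum_subset (Finset.range_subset_range.2 hm)]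
    · exact htot
    · intro j _ hj
      rw [Finset.mem_range, not_lt] at hj
      exact hDz j hj
  -- prefix sums nonneg
  have hIic : ∀ (f : Fin n → ℝ) (g : ℕ → ℝ), (∀ i : Fin n, g i.1 = f i) →
      ∀ i : Fin n, ∑ j ∈ Finset.range (i.1 + 1), g j = ∑ j ∈ Finset.Iic i, f j := by
    intro f g hfg i
    have h1 : Finset.range (i.1 + 1) = Finset.Iic i.1 := by
      ext j; simp [Nat.lt_succ_iff]
    rw [h1, ← Fin.map_valEmbedding_Iic, Finset.sum_map]
    exact Finset.sum_congr rfl fun j _ => (hfg j).trans (congrArg f rfl)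
  have hQ : ∀ i, i < n → 0 ≤ P i := by
    intro i hi
    rw [hPdef]; dsimp only
    rw [hDdef]; dsimp only
    rw [Finset.sum_sub_distrib]
    have h1 := hIic x X hXv ⟨i, hi⟩
    have h2 := hIic y Y hYv ⟨i, hi⟩
    dsimp only at h1 h2
    rw [h1, h2]
    have := hdom ⟨i, hi⟩
    linarith
  set c : ℕ → ℝ := fun i => sc (Y i) (X i) with hcdef
  have hkey : ∀ i, X i * Real.log (X i) - Y i * Real.log (Y i) = c i * D i := by
    intro i
    by_cases h : X i = Y i
    · rw [hDdef]; dsimp only; rw [h]; ring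
    · rw [hcdef, hDdef]; dsimp only
      rw [sc, if_neg (fun hh => h hh.symm)]
      rw [div_mul_eq_mul_div, mul_comm, mul_div_assoc,
        div_self (sub_ne_zero.2 h), mul_one]
  have habel : ∑ i ∈ Finset.range n, c i * D i
      = ∑ i ∈ Finset.range (n - 1), (c i - c (i + 1)) * P i := by
    have h := Finset.sum_range_by_parts c D n
    simp only [smul_eq_mul] at h
    rw [h, htot, mul_zero, zero_sub, ← Finset.sum_neg_distrib]
    exact Finset.sum_congr rfl fun i _ => by rw [hPdef]; ring
  have hterm : ∀ i ∈ Finset.range (n - 1), 0 ≤ (c i - c (i + 1)) * P i := by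
    intro i hi
    rw [Finset.mem_range] at hi
    by_cases h0 : Y (i + 1) = 0 ∧ X (i + 1) = 0
    · have hPi : P i = 0 := by
        have hz : ∀ j ∈ Finset.Ico (i + 1) n, D j = 0 := by
          intro j hj
          rw [Finset.mem_Ico] at hj
          have hXj : X j = 0 :=
            le_antisymm (h0.2 ▸ hXanti (i + 1) j hj.1) (hX0 j)
          have hYj : Y j = 0 :=
            le_antisymm (h0.1 ▸ hYanti (i + 1) j hj.1) (hY0 j)
          rw [hDdef]; dsimp only; rw [hXj, hYj]; ring
        have hico : ∑ j ∈ Finset.Ico (i + 1) n, D j = 0 :=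
          Finset.sum_eq_zero hz
        have hsub := Finset.sum_Ico_eq_sub D (show i + 1 ≤ n by omega)
        rw [hico, htot] at hsub
        rw [hPdef]; dsimp only
        linarith
      rw [hPi, mul_zero]
    · have hc : c (i + 1) ≤ c i := by
        rw [hcdef]; dsimp only
        exact sc_mono (hY0 (i + 1)) (hX0 (i + 1))
          (hYanti i (i + 1) (by omega)) (hXanti i (i + 1) (by omega)) h0
      exact mul_nonneg (by linarith) (hQ i (by omega))
  -- strict part
  have hexN : ∃ m, X m ≠ Y m := by
    have hex : ∃ i : Fin n, x i ≠ y i := by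
      by_contra h
      push_neg at h
      exact hne (funext h)
    obtain ⟨i0, hi0⟩ := hex
    exact ⟨i0.1, by rw [hXv i0, hYv i0]; exact hi0⟩
  set k := Nat.find hexN with hkdef
  have hk : X k ≠ Y k := Nat.find_spec hexN
  have hkmin : ∀ j, j < k → X j = Y j := by
    intro j hj
    have := Nat.find_min hexN hj
    push_neg at this
    exact this
  have hkn : k < n := by
    by_contra h
    push_neg at h
    apply hk
    rw [hXdef, hYdef]; dsimp only
    rw [dif_neg (by omega), dif_neg (by omega)]
  have hPk : P k = D k := by
    rw [hPdef]; dsimp only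
    rw [Finset.sum_range_succ]
    have : ∑ j ∈ Finset.range k, D j = 0 := by
      apply Finset.sum_eq_zero
      intro j hj
      rw [Finset.mem_range] at hj
      rw [hDdef]; dsimp only
      rw [hkmin j hj]; ring
    rw [this, zero_add]
  have hXYk : Y k < X k := by
    have h1 := hQ k hkn
    rw [hPk] at h1
    rw [hDdef] at h1; dsimp only at h1
    rcases lt_or_eq_of_le (by linarith : Y k ≤ X k) with h | h
    · exact h
    · exact absurd h.symm hk
  have hPkpos : 0 < P k := by
    rw [hPk, hDdef]; dsimp only; linarith
  have hkn1 : k < n - 1 := by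
    rcases lt_or_eq_of_le (show k ≤ n - 1 by omega) with h | h
    · exact h
    · exfalso
      have := hPtot k (by omega)
      linarith
  have hexl : ∃ m, k < m ∧ P m ≤ 0 := ⟨n - 1, hkn1, le_of_eq (hPtot (n - 1) (by omega))⟩
  set l := Nat.find hexl with hldef
  obtain ⟨hkl, hPl⟩ : k < l ∧ P l ≤ 0 := Nat.find_spec hexl
  have hln : l ≤ n - 1 := Nat.find_min' hexl ⟨hkn1, le_of_eq (hPtot (n - 1) (by omega))⟩
  have hPmid : ∀ j, k ≤ j → j < l → 0 < P j := by
    intro j h1 h2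
    rcases eq_or_lt_of_le h1 with rfl | h1
    · exact hPkpos
    · have := Nat.find_min hexl h2
      push_neg at this
      exact this h1
  have hPl0 : P l = 0 := le_antisymm hPl (hQ l (by omega))
  have hDl : D l < 0 := by
    have hP1 : 0 < P (l - 1) := hPmid (l - 1) (by omega) (by omega)
    have hsplit : P l = P (l - 1) + D l := by
      have e : l - 1 + 1 = l := by omega
      rw [hPdef]; dsimp only
      rw [e, Finset.sum_range_succ]
    linarith
  have hXYl : X l < Y l := by
    rw [hDdef] at hDl; dsimp only at hDl; linarith
  have hcstrict : c l < c k := by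
    rw [hcdef]; dsimp only
    rw [sc_symm (Y l) (X l)]
    exact sc_strict (X l) (Y l) (Y k) (X k) (hX0 l) hXYl (hYanti k l (le_of_lt hkl)) hXYk
  have htel : ∑ i ∈ Finset.Ico k l, (c i - c (i + 1)) = c k - c l := by
    rw [Finset.sum_Ico_eq_sub _ (le_of_lt hkl), Finset.sum_range_sub' c, Finset.sum_range_sub' c]
    ring
  have hexpos : ∃ i ∈ Finset.range (n - 1), 0 < (c i - c (i + 1)) * P i := by
    have h1 : ∃ i ∈ Finset.Ico k l, 0 < c i - c (i + 1) := by
      by_contra h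
      push_neg at h
      have := Finset.sum_nonpos h
      rw [htel] at this
      linarith
    obtain ⟨i, hi, hpos⟩ := h1
    rw [Finset.mem_Ico] at hi
    exact ⟨i, Finset.mem_range.2 (by omega),
      mul_pos hpos (hPmid i hi.1 hi.2)⟩
  have hmain : 0 < ∑ i ∈ Finset.range n, c i * D i := by
    rw [habel]
    exact Finset.sum_pos' hterm hexpos
  -- back to entropy
  have hAB : ∑ i, y i * Real.log (y i) < ∑ i, x i * Real.log (x i) := by
    have h1 : ∑ i ∈ Finset.range n, (X i * Real.log (X i) - Y i * Real.log (Y i))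
        = ∑ i ∈ Finset.range n, c i * D i :=
      Finset.sum_congr rfl fun i _ => hkey i
    rw [Finset.sum_sub_distrib] at h1
    have hx' : ∑ i ∈ Finset.range n, X i * Real.log (X i) = ∑ i, x i * Real.log (x i) :=
      hconv _ _ fun i => by rw [hXv i]
    have hy' : ∑ i ∈ Finset.range n, Y i * Real.log (Y i) = ∑ i, y i * Real.log (y i) :=
      hconv _ _ fun i => by rw [hYv i]
    rw [hx', hy'] at h1
    linarith [hmain, h1.symm ▸ hmain]
  have hlog2 : 0 < Real.log 2 := Real.log_pos (by norm_num)
  have hpt : ∀ t : ℝ, 0 ≤ t →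
      t * Real.logb 2 (S / t) = (t * Real.log S - t * Real.log t) / Real.log 2 := by
    intro t ht
    rcases eq_or_lt_of_le ht with rfl | ht
    · simp
    · rw [Real.logb, Real.log_div (ne_of_gt hS) (ne_of_gt ht)]
      field_simp
  have hxfin : ∑ i, x i * Real.logb 2 (S / x i)
      = (S * Real.log S - ∑ i, x i * Real.log (x i)) / Real.log 2 := by
    rw [Finset.sum_congr rfl fun i _ => hpt (x i) (hx0 i)]
    rw [← Finset.sum_div, Finset.sum_sub_distrib, ← Finset.sum_mul, hxS]
  have hyfin : ∑ i, y i * Real.logb 2 (S / y i)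
      = (S * Real.log S - ∑ i, y i * Real.log (y i)) / Real.log 2 := by
    rw [Finset.sum_congr rfl fun i _ => hpt (y i) (hy0 i)]
    rw [← Finset.sum_div, Finset.sum_sub_distrib, ← Finset.sum_mul, hyS]
  rw [hxfin, hyfin]
  rw [div_lt_div_iff_of_pos_right hlog2]
  linarith
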